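/- arXiv:2310.18717 — 3 statements merged into one kernel-verified Lean document; each statement's English description precedes it below -/
import Mathlib

section
/- For every integer d ≥ 2 and every real z with z > a_d, the Stieltjes transform of the semicircle-type law equals g_d; that is, ∫_{−a_d}^{a_d} (d/(2π(d−1)))·√(a_d² − x²) / (x − z) dx = g_d(z). -/
open Real Set

/-- The edge of the support: `a_d = 2 √((d-1)/d)`. -/
noncomputable def aEdge (d : ℕ) : ℝ := 2 * Real.sqrt (((d : ℝ) - 1) / d)

/-- Stieltjes transform `g_d(z) = (-dz + d√(z² - 4(d-1)/d)) / (2(d-1))`. -/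
noncomputable def gd (d : ℕ) (z : ℝ) : ℝ :=
  (-(d : ℝ) * z + (d : ℝ) * Real.sqrt (z ^ 2 - 4 * ((d : ℝ) - 1) / d)) / (2 * ((d : ℝ) - 1))

/-- Core computation: the Stieltjes transform of the (unnormalized) semicircle density. -/
lemma semicircle_integral_key {a z : ℝ} (ha : 0 < a) (hz : a < z) :
    ∫ x in (-a)..a, Real.sqrt (a ^ 2 - x ^ 2) / (x - z)
      = Real.pi * (Real.sqrt (z ^ 2 - a ^ 2) - z) := by
  have hz0 : 0 < z := ha.trans hz
  have hza : 0 < z ^ 2 - a ^ 2 := by nlinarith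
  set w := Real.sqrt (z ^ 2 - a ^ 2) with hwdef
  have hw : 0 < w := Real.sqrt_pos.mpr hza
  have hw2 : w ^ 2 = z ^ 2 - a ^ 2 := Real.sq_sqrt hza.le
  have hwne : w ≠ 0 := hw.ne'
  have hane : a ≠ 0 := ha.ne'
  set F : ℝ → ℝ := fun x =>
    Real.sqrt (a ^ 2 - x ^ 2) - z * Real.arcsin (x / a)
      + 2 * w * Real.arctan ((z * x - a ^ 2 - a * Real.sqrt (a ^ 2 - x ^ 2)) /
        (w * (a + Real.sqrt (a ^ 2 - x ^ 2)))) with hFdef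
  have hsqrt_cont : Continuous fun x : ℝ => Real.sqrt (a ^ 2 - x ^ 2) :=
    (continuous_const.sub (continuous_pow 2)).sqrt
  have hden_ne : ∀ x : ℝ, w * (a + Real.sqrt (a ^ 2 - x ^ 2)) ≠ 0 := by
    intro x
    have h := Real.sqrt_nonneg (a ^ 2 - x ^ 2)
    positivity
  have hcont : ContinuousOn F (Set.Icc (-a) a) := by
    apply Continuous.continuousOn
    apply Continuous.add
    · exact hsqrt_cont.sub
        (continuous_const.mul (Real.continuous_arcsin.comp (continuous_id.div_const a)))
    · refine continuous_const.mul (Real.continuous_arctan.comp ?_)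
      exact Continuous.div (by continuity)
        (continuous_const.mul (continuous_const.add hsqrt_cont)) hden_ne
  have hderiv : ∀ x ∈ Set.Ioo (-a) a,
      HasDerivAt F (Real.sqrt (a ^ 2 - x ^ 2) / (x - z)) x := by
    intro x hx
    have hxa : x ^ 2 < a ^ 2 := by nlinarith [hx.1, hx.2]
    have hspos : 0 < a ^ 2 - x ^ 2 := by linarith
    set s := Real.sqrt (a ^ 2 - x ^ 2) with hsdef
    have hs : 0 < s := Real.sqrt_pos.mpr hspos
    have hs2 : s ^ 2 = a ^ 2 - x ^ 2 := Real.sq_sqrt hspos.le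
    have hsne : s ≠ 0 := hs.ne'
    have hzx : 0 < z - x := by nlinarith [hx.2]
    have hxz : x - z ≠ 0 := by intro h; nlinarith
    have haspos : 0 < a + s := by positivity
    have hasne : a + s ≠ 0 := haspos.ne'
    -- derivative of the sqrt term
    have hS : HasDerivAt (fun y : ℝ => Real.sqrt (a ^ 2 - y ^ 2)) (-x / s) x := by
      have h0 : HasDerivAt (fun y : ℝ => a ^ 2 - y ^ 2) (-(2 * x)) x := by
        simpa using (hasDerivAt_pow 2 x).const_sub (a ^ 2)
      have h1 := h0.sqrt hspos.ne'
      convert h1 using 1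
      rw [← hsdef]
      field_simp
    -- derivative of the arcsin term
    have harcsin : HasDerivAt (fun y : ℝ => Real.arcsin (y / a)) (1 / s) x := by
      have hlt : |x / a| < 1 := by
        rw [abs_div, abs_of_pos ha, div_lt_one ha]
        exact abs_lt.mpr ⟨hx.1, hx.2⟩
      have h1 : x / a ≠ -1 := by
        intro h; rw [h] at hlt; simp at hlt
      have h2 : x / a ≠ 1 := by
        intro h; rw [h] at hlt; simp at hlt
      have hd : HasDerivAt (fun y : ℝ => y / a) (1 / a) x := by
        simpa using (hasDerivAt_id x).div_const a
      have h3 := (Real.hasDerivAt_arcsin h1 h2).comp x hd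
      have hsq : Real.sqrt (1 - (x / a) ^ 2) = s / a := by
        rw [show (1 : ℝ) - (x / a) ^ 2 = (a ^ 2 - x ^ 2) / a ^ 2 by field_simp,
          Real.sqrt_div hspos.le, Real.sqrt_sq ha.le, hsdef]
      refine h3.congr_deriv ?_
      rw [hsq]
      field_simp
    -- derivative of numerator and denominator of the arctan argument
    have hN : HasDerivAt (fun y : ℝ => z * y - a ^ 2 - a * Real.sqrt (a ^ 2 - y ^ 2))
        (z * 1 - a * (-x / s)) x :=
      (((hasDerivAt_id x).const_mul z).sub_const (a ^ 2)).sub (hS.const_mul a)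
    have hD : HasDerivAt (fun y : ℝ => w * (a + Real.sqrt (a ^ 2 - y ^ 2)))
        (w * (-x / s)) x :=
      (hS.const_add a).const_mul w
    have hD0 : w * (a + Real.sqrt (a ^ 2 - x ^ 2)) ≠ 0 := hden_ne x
    have hu := hN.div hD hD0
    have harct := hu.arctan
    simp only [Pi.div_apply] at harct
    have harct2 : HasDerivAt (fun y : ℝ => Real.arctan
        ((z * y - a ^ 2 - a * Real.sqrt (a ^ 2 - y ^ 2)) /
          (w * (a + Real.sqrt (a ^ 2 - y ^ 2)))))
        (w / (2 * s * (z - x))) x := by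
      refine harct.congr_deriv ?_
      rw [← hsdef]
      have hC : (z * 1 - a * (-x / s)) * (w * (a + s)) - (z * x - a ^ 2 - a * s) * (w * (-x / s))
          = a * z * w * (a + s) / s := by
        field_simp
        linear_combination z * hs2
      have hkey1 : (w * (a + s)) ^ 2 + (z * x - a ^ 2 - a * s) ^ 2
          = 2 * a * z * (a + s) * (z - x) := by
        linear_combination (a + s) ^ 2 * hw2 + z ^ 2 * hs2
      have h1u : 1 + ((z * x - a ^ 2 - a * s) / (w * (a + s))) ^ 2
          = (2 * a * z * (a + s) * (z - x)) / (w * (a + s)) ^ 2 := by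
        rw [div_pow, ← hkey1]
        field_simp
      rw [hC, h1u]
      have hA : (2 * a * z * (a + s) * (z - x)) ≠ 0 := by positivity
      field_simp
    have hcomb := (hS.sub (harcsin.const_mul z)).add (harct2.const_mul (2 * w))
    refine hcomb.congr_deriv ?_
    field_simp
    linear_combination (x - z) * hs2 + (x - z) * hw2
  have hint : IntervalIntegrable (fun x => Real.sqrt (a ^ 2 - x ^ 2) / (x - z))
      MeasureTheory.volume (-a) a := by
    apply ContinuousOn.intervalIntegrable
    apply ContinuousOn.div hsqrt_cont.continuousOn
      ((continuous_id.sub continuous_const).continuousOn)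
    intro x hx
    rw [Set.uIcc_of_le (by linarith)] at hx
    have := hx.2
    intro h
    have h' : x - z = 0 := h
    linarith [hx.2]
  have hFTC := intervalIntegral.integral_eq_sub_of_hasDeriv_right_of_le (by linarith : -a ≤ a)
    hcont (fun x hx => (hderiv x hx).hasDerivWithinAt) hint
  rw [hFTC]
  -- evaluate F at the endpoints
  have hsa : Real.sqrt (a ^ 2 - a ^ 2) = 0 := by rw [sub_self, Real.sqrt_zero]
  have hsna : Real.sqrt (a ^ 2 - (-a) ^ 2) = 0 := by
    rw [neg_pow, show ((-1:ℝ))^2 * a ^ 2 = a ^ 2 by ring, sub_self, Real.sqrt_zero]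
  have hFa : F a = -(z * (Real.pi / 2)) + 2 * w * Real.arctan ((z - a) / w) := by
    rw [hFdef]
    simp only [hsa, div_self hane, Real.arcsin_one]
    rw [show (z * a - a ^ 2 - a * 0) / (w * (a + 0)) = (z - a) / w by
      field_simp; ring]
    ring
  have hFna : F (-a) = z * (Real.pi / 2) - 2 * w * Real.arctan ((z + a) / w) := by
    rw [hFdef]
    simp only [hsna]
    rw [show -a / a = -1 by field_simp, Real.arcsin_neg, Real.arcsin_one,
      show (z * -a - a ^ 2 - a * 0) / (w * (a + 0)) = -((z + a) / w) by
        field_simp; ring,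
      Real.arctan_neg]
    ring
  have harcsum : Real.arctan ((z - a) / w) + Real.arctan ((z + a) / w) = Real.pi / 2 := by
    have h1 : (0 : ℝ) < (z - a) / w := by
      apply div_pos (by linarith) hw
    have h2 : (z + a) / w = ((z - a) / w)⁻¹ := by
      rw [inv_div, div_eq_div_iff hwne (by linarith : z - a ≠ 0)]
      linear_combination -hw2
    rw [h2, Real.arctan_inv_of_pos h1]
    ring
  rw [hFa, hFna]
  nlinarith [harcsum]

/-- For every `d ≥ 2` and `z > a_d`, the Stieltjes transform of the semicircle-type law
with density `ρ_d(x) = (d/(2π(d−1)))·√(a_d² − x²)` on `[−a_d, a_d]` equals `g_d(z)`: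
`∫_{−a_d}^{a_d} ρ_d(x)/(x − z) dx = g_d(z)`. -/
theorem semicircle_stieltjes_transform (d : ℕ) (hd : 2 ≤ d) (z : ℝ) (hz : z > aEdge d) :
    ∫ x in (-aEdge d)..(aEdge d),
      ((d : ℝ) / (2 * Real.pi * ((d : ℝ) - 1))) * Real.sqrt (aEdge d ^ 2 - x ^ 2) / (x - z)
      = gd d z := by
  have hd2 : (2 : ℝ) ≤ (d : ℝ) := by exact_mod_cast hd
  have hdpos : (0 : ℝ) < (d : ℝ) := by linarith
  have hd1 : (0 : ℝ) < (d : ℝ) - 1 := by linarith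
  have hr : (0 : ℝ) < ((d : ℝ) - 1) / d := div_pos hd1 hdpos
  have ha : 0 < aEdge d := by
    unfold aEdge
    exact mul_pos two_pos (Real.sqrt_pos.mpr hr)
  have ha2 : aEdge d ^ 2 = 4 * ((d : ℝ) - 1) / d := by
    unfold aEdge
    rw [mul_pow, Real.sq_sqrt hr.le]
    ring
  have key := semicircle_integral_key ha hz
  simp_rw [mul_div_assoc]
  rw [intervalIntegral.integral_const_mul, key, gd, ha2]
  have hpi : Real.pi ≠ 0 := Real.pi_ne_zero
  field_simp
  ring
end

section
/- Let T ∈ ℝ^{n₁×n₂×n₃} and suppose (λ, u₁, u₂, u₃), with λ ∈ ℝ and u₁, u₂, u₃ unit vectors, globally minimizes ‖T − λ'·v₁⊗v₂⊗v₃‖_F² over all λ' ∈ ℝ and unit vectors v₁, v₂, v₃. Then the singular-pair identities hold: T(·, u₂, u₃) = λ·u₁, T(u₁, ·, u₃) = λ·u₂, T(u₁, u₂, ·) = λ·u₃, and λ = T(u₁, u₂, u₃). -/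
lemma expand3 {n₁ n₂ n₃ : ℕ} (T : Fin n₁ → Fin n₂ → Fin n₃ → ℝ) (c : ℝ)
    (v₁ : Fin n₁ → ℝ) (v₂ : Fin n₂ → ℝ) (v₃ : Fin n₃ → ℝ)
    (h1 : ∑ p, v₁ p ^ 2 = 1) (h2 : ∑ q, v₂ q ^ 2 = 1) (h3 : ∑ r, v₃ r ^ 2 = 1) :
    ∑ p, ∑ q, ∑ r, (T p q r - c * v₁ p * v₂ q * v₃ r) ^ 2
    = (∑ p, ∑ q, ∑ r, (T p q r) ^ 2)
      - 2 * c * (∑ p, ∑ q, ∑ r, T p q r * v₁ p * v₂ q * v₃ r) + c ^ 2 := by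
  have h : ∀ p q r, (T p q r - c * v₁ p * v₂ q * v₃ r) ^ 2
      = (T p q r) ^ 2 - 2 * c * (T p q r * v₁ p * v₂ q * v₃ r)
        + c ^ 2 * (v₁ p ^ 2 * (v₂ q ^ 2 * v₃ r ^ 2)) := fun _ _ _ => by ring
  simp_rw [h, Finset.sum_add_distrib, Finset.sum_sub_distrib, ← Finset.mul_sum,
    ← Finset.sum_mul, h3, h2, h1, mul_one]

lemma aux_mode1 (n₁ n₂ n₃ : ℕ)
    (T : Fin n₁ → Fin n₂ → Fin n₃ → ℝ) (lam : ℝ)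
    (u₁ : Fin n₁ → ℝ) (u₂ : Fin n₂ → ℝ) (u₃ : Fin n₃ → ℝ)
    (hu₁ : ∑ p, u₁ p ^ 2 = 1) (hu₂ : ∑ q, u₂ q ^ 2 = 1) (hu₃ : ∑ r, u₃ r ^ 2 = 1)
    (hmin : ∀ (lam' : ℝ) (v₁ : Fin n₁ → ℝ) (v₂ : Fin n₂ → ℝ) (v₃ : Fin n₃ → ℝ),
        (∑ p, v₁ p ^ 2 = 1) → (∑ q, v₂ q ^ 2 = 1) → (∑ r, v₃ r ^ 2 = 1) →
        (∑ p, ∑ q, ∑ r, (T p q r - lam * u₁ p * u₂ q * u₃ r) ^ 2)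
          ≤ ∑ p, ∑ q, ∑ r, (T p q r - lam' * v₁ p * v₂ q * v₃ r) ^ 2) :
    (∀ p, (∑ q, ∑ r, T p q r * u₂ q * u₃ r) = lam * u₁ p) ∧
    lam = ∑ p, ∑ q, ∑ r, T p q r * u₁ p * u₂ q * u₃ r := by
  set w : Fin n₁ → ℝ := fun p => ∑ q, ∑ r, T p q r * u₂ q * u₃ r with hw
  have hS : ∀ (v : Fin n₁ → ℝ), (∑ p, ∑ q, ∑ r, T p q r * v p * u₂ q * u₃ r)
      = ∑ p, w p * v p := by
    intro v
    refine Finset.sum_congr rfl fun p _ => ?_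
    simp only [hw]
    rw [Finset.sum_mul]
    refine Finset.sum_congr rfl fun q _ => ?_
    rw [Finset.sum_mul]
    exact Finset.sum_congr rfl fun r _ => by ring
  set S : ℝ := ∑ p, w p * u₁ p with hSdef
  -- Step A : lam = S
  have hA : lam = S := by
    have h := hmin S u₁ u₂ u₃ hu₁ hu₂ hu₃
    rw [expand3 T lam u₁ u₂ u₃ hu₁ hu₂ hu₃, expand3 T S u₁ u₂ u₃ hu₁ hu₂ hu₃,
      hS u₁] at h
    nlinarith [sq_nonneg (lam - S)]
  -- Step B : ∑ w² ≤ lam²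
  have hB : ∑ p, w p ^ 2 ≤ lam ^ 2 := by
    by_cases hz : ∑ p, w p ^ 2 = 0
    · rw [hz]; positivity
    · have hpos : 0 < ∑ p, w p ^ 2 :=
        lt_of_le_of_ne (Finset.sum_nonneg fun p _ => sq_nonneg _) (Ne.symm hz)
      set N : ℝ := Real.sqrt (∑ p, w p ^ 2) with hN
      have hNpos : 0 < N := Real.sqrt_pos.mpr hpos
      have hN2 : N ^ 2 = ∑ p, w p ^ 2 := Real.sq_sqrt hpos.le
      have hv1 : ∑ p, (w p / N) ^ 2 = 1 := by
        simp_rw [div_pow, ← Finset.sum_div, ← hN2]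
        field_simp
      have h := hmin N (fun p => w p / N) u₂ u₃ hv1 hu₂ hu₃
      rw [expand3 T lam u₁ u₂ u₃ hu₁ hu₂ hu₃,
        expand3 T N (fun p => w p / N) u₂ u₃ hv1 hu₂ hu₃, hS u₁,
        hS (fun p => w p / N)] at h
      have hC : (∑ p, w p * (w p / N)) = N := by
        simp_rw [mul_div_assoc', ← sq, ← Finset.sum_div, ← hN2]
        field_simp [sq]
      rw [hC, ← hSdef, ← hA] at h
      rw [← hN2]
      nlinarith [h]
  -- Step C : conclusion
  have hkey : ∑ p, (w p - lam * u₁ p) ^ 2 ≤ 0 := by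
    have hexp : ∑ p, (w p - lam * u₁ p) ^ 2
        = (∑ p, w p ^ 2) - 2 * lam * (∑ p, w p * u₁ p) + lam ^ 2 * (∑ p, u₁ p ^ 2) := by
      simp_rw [Finset.mul_sum, ← Finset.sum_sub_distrib, ← Finset.sum_add_distrib]
      exact Finset.sum_congr rfl fun p _ => by ring
    rw [hexp, hu₁, ← hSdef, ← hA]
    nlinarith [hB]
  have hzero : ∀ p ∈ Finset.univ, (w p - lam * u₁ p) ^ 2 = 0 := by
    rw [← Finset.sum_eq_zero_iff_of_nonneg fun p _ => sq_nonneg _]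
    exact le_antisymm hkey (Finset.sum_nonneg fun p _ => sq_nonneg _)
  constructor
  · intro p
    have := hzero p (Finset.mem_univ p)
    have := pow_eq_zero_iff (n := 2) (by norm_num) |>.mp this
    linarith [this]
  · rw [hA, hSdef, hS u₁]

/-- If `(λ, u₁, u₂, u₃)` (with `λ ∈ ℝ` and `u₁, u₂, u₃` unit vectors) globally minimizes
`‖T − λ'·v₁⊗v₂⊗v₃‖_F²` over all `λ' ∈ ℝ` and unit vectors `v₁, v₂, v₃`, then the
singular-pair identities hold: `T(·,u₂,u₃) = λ·u₁`, `T(u₁,·,u₃) = λ·u₂`,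
`T(u₁,u₂,·) = λ·u₃`, and `λ = T(u₁,u₂,u₃)`. -/
theorem best_rank_one_singular_pair (n₁ n₂ n₃ : ℕ)
    (T : Fin n₁ → Fin n₂ → Fin n₃ → ℝ) (lam : ℝ)
    (u₁ : Fin n₁ → ℝ) (u₂ : Fin n₂ → ℝ) (u₃ : Fin n₃ → ℝ)
    (hu₁ : ∑ p, u₁ p ^ 2 = 1) (hu₂ : ∑ q, u₂ q ^ 2 = 1) (hu₃ : ∑ r, u₃ r ^ 2 = 1)
    (hmin : ∀ (lam' : ℝ) (v₁ : Fin n₁ → ℝ) (v₂ : Fin n₂ → ℝ) (v₃ : Fin n₃ → ℝ),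
        (∑ p, v₁ p ^ 2 = 1) → (∑ q, v₂ q ^ 2 = 1) → (∑ r, v₃ r ^ 2 = 1) →
        (∑ p, ∑ q, ∑ r, (T p q r - lam * u₁ p * u₂ q * u₃ r) ^ 2)
          ≤ ∑ p, ∑ q, ∑ r, (T p q r - lam' * v₁ p * v₂ q * v₃ r) ^ 2) :
    (∀ p, (∑ q, ∑ r, T p q r * u₂ q * u₃ r) = lam * u₁ p) ∧
    (∀ q, (∑ p, ∑ r, T p q r * u₁ p * u₃ r) = lam * u₂ q) ∧
    (∀ r, (∑ p, ∑ q, T p q r * u₁ p * u₂ q) = lam * u₃ r) ∧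
    lam = ∑ p, ∑ q, ∑ r, T p q r * u₁ p * u₂ q * u₃ r := by
  have swap12 : ∀ (c : ℝ) (a : Fin n₁ → ℝ) (b : Fin n₂ → ℝ) (d : Fin n₃ → ℝ),
      ∑ q, ∑ p, ∑ r, (T p q r - c * b q * a p * d r) ^ 2
        = ∑ p, ∑ q, ∑ r, (T p q r - c * a p * b q * d r) ^ 2 := by
    intro c a b d
    rw [Finset.sum_comm]
    exact Finset.sum_congr rfl fun p _ => Finset.sum_congr rfl fun q _ =>
      Finset.sum_congr rfl fun r _ => by ring
  have swap13 : ∀ (c : ℝ) (a : Fin n₁ → ℝ) (b : Fin n₂ → ℝ) (d : Fin n₃ → ℝ),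
      ∑ r, ∑ p, ∑ q, (T p q r - c * d r * a p * b q) ^ 2
        = ∑ p, ∑ q, ∑ r, (T p q r - c * a p * b q * d r) ^ 2 := by
    intro c a b d
    rw [Finset.sum_comm]
    refine Finset.sum_congr rfl fun p _ => ?_
    rw [Finset.sum_comm]
    exact Finset.sum_congr rfl fun q _ => Finset.sum_congr rfl fun r _ => by ring
  have h1 := aux_mode1 n₁ n₂ n₃ T lam u₁ u₂ u₃ hu₁ hu₂ hu₃ hmin
  have h2 := aux_mode1 n₂ n₁ n₃ (fun q p r => T p q r) lam u₂ u₁ u₃ hu₂ hu₁ hu₃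
    (by
      intro lam' v₂ v₁ v₃ hv₂ hv₁ hv₃
      rw [swap12 lam u₁ u₂ u₃, swap12 lam' v₁ v₂ v₃]
      exact hmin lam' v₁ v₂ v₃ hv₁ hv₂ hv₃)
  have h3 := aux_mode1 n₃ n₁ n₂ (fun r p q => T p q r) lam u₃ u₁ u₂ hu₃ hu₁ hu₂
    (by
      intro lam' v₃ v₁ v₂ hv₃ hv₁ hv₂
      rw [swap13 lam u₁ u₂ u₃, swap13 lam' v₁ v₂ v₃]
      exact hmin lam' v₁ v₂ v₃ hv₁ hv₂ hv₃)
  exact ⟨h1.1, h2.1, h3.1, h1.2⟩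
end

section
/- Let T ∈ ℝ^{n₁×n₂×n₃} and suppose (λ, u₁, u₂, u₃), with λ ≥ 0 and u₁, u₂, u₃ unit vectors, globally minimizes ‖T − λ'·v₁⊗v₂⊗v₃‖_F² over all λ' ∈ ℝ and unit vectors v₁, v₂, v₃. Then λ coincides with the spectral norm of T: λ = ‖T‖ = sup{ |T(v₁,v₂,v₃)| : ‖v₁‖ = ‖v₂‖ = ‖v₃‖ = 1 }. -/
lemma tensor_expand {n₁ n₂ n₃ : ℕ} (T : Fin n₁ → Fin n₂ → Fin n₃ → ℝ) (s : ℝ)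
    (v₁ : Fin n₁ → ℝ) (v₂ : Fin n₂ → ℝ) (v₃ : Fin n₃ → ℝ) :
    (∑ p, ∑ q, ∑ r, (T p q r - s * v₁ p * v₂ q * v₃ r) ^ 2)
      = (∑ p, ∑ q, ∑ r, (T p q r) ^ 2)
        - 2 * s * (∑ p, ∑ q, ∑ r, T p q r * v₁ p * v₂ q * v₃ r)
        + s ^ 2 * (∑ p, v₁ p ^ 2) * (∑ q, v₂ q ^ 2) * (∑ r, v₃ r ^ 2) := by
  have h1 : ∀ p q r, (T p q r - s * v₁ p * v₂ q * v₃ r) ^ 2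
      = (T p q r) ^ 2 - 2 * s * (T p q r * v₁ p * v₂ q * v₃ r)
        + s ^ 2 * (v₁ p ^ 2 * (v₂ q ^ 2 * v₃ r ^ 2)) := by intros; ring
  simp only [h1, Finset.sum_add_distrib, Finset.sum_sub_distrib, ← Finset.mul_sum,
    ← Finset.sum_mul]
  ring

/-- If `(λ, u₁, u₂, u₃)` (with `λ ≥ 0` and `u₁, u₂, u₃` unit vectors) globally minimizes
`‖T − λ'·v₁⊗v₂⊗v₃‖_F²` over all `λ' ∈ ℝ` and unit vectors `v₁, v₂, v₃`, then `λ`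
coincides with the spectral norm of `T`:
`λ = ‖T‖ = sup { |T(v₁,v₂,v₃)| : ‖v₁‖ = ‖v₂‖ = ‖v₃‖ = 1 }`. -/
theorem best_rank_one_spectral_norm (n₁ n₂ n₃ : ℕ)
    (T : Fin n₁ → Fin n₂ → Fin n₃ → ℝ) (lam : ℝ) (hlam : 0 ≤ lam)
    (u₁ : Fin n₁ → ℝ) (u₂ : Fin n₂ → ℝ) (u₃ : Fin n₃ → ℝ)
    (hu₁ : ∑ p, u₁ p ^ 2 = 1) (hu₂ : ∑ q, u₂ q ^ 2 = 1) (hu₃ : ∑ r, u₃ r ^ 2 = 1)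
    (hmin : ∀ (lam' : ℝ) (v₁ : Fin n₁ → ℝ) (v₂ : Fin n₂ → ℝ) (v₃ : Fin n₃ → ℝ),
        (∑ p, v₁ p ^ 2 = 1) → (∑ q, v₂ q ^ 2 = 1) → (∑ r, v₃ r ^ 2 = 1) →
        (∑ p, ∑ q, ∑ r, (T p q r - lam * u₁ p * u₂ q * u₃ r) ^ 2)
          ≤ ∑ p, ∑ q, ∑ r, (T p q r - lam' * v₁ p * v₂ q * v₃ r) ^ 2) :
    lam = sSup {x : ℝ | ∃ (v₁ : Fin n₁ → ℝ) (v₂ : Fin n₂ → ℝ) (v₃ : Fin n₃ → ℝ),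
        (∑ p, v₁ p ^ 2 = 1) ∧ (∑ q, v₂ q ^ 2 = 1) ∧ (∑ r, v₃ r ^ 2 = 1) ∧
        x = |∑ p, ∑ q, ∑ r, T p q r * v₁ p * v₂ q * v₃ r|} := by
  set C : ℝ := ∑ p, ∑ q, ∑ r, T p q r * u₁ p * u₂ q * u₃ r with hC
  -- λ = C
  have hlamC : lam = C := by
    have h := hmin C u₁ u₂ u₃ hu₁ hu₂ hu₃
    rw [tensor_expand, tensor_expand, hu₁, hu₂, hu₃, ← hC] at h
    nlinarith [sq_nonneg (lam - C)]
  have hgreat : IsGreatest {x : ℝ | ∃ (v₁ : Fin n₁ → ℝ) (v₂ : Fin n₂ → ℝ) (v₃ : Fin n₃ → ℝ),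
      (∑ p, v₁ p ^ 2 = 1) ∧ (∑ q, v₂ q ^ 2 = 1) ∧ (∑ r, v₃ r ^ 2 = 1) ∧
      x = |∑ p, ∑ q, ∑ r, T p q r * v₁ p * v₂ q * v₃ r|} lam := by
    constructor
    · exact ⟨u₁, u₂, u₃, hu₁, hu₂, hu₃, by rw [← hC, ← hlamC, abs_of_nonneg hlam]⟩
    · rintro x ⟨v₁, v₂, v₃, h₁, h₂, h₃, rfl⟩
      set D : ℝ := ∑ p, ∑ q, ∑ r, T p q r * v₁ p * v₂ q * v₃ r with hD
      have h := hmin D v₁ v₂ v₃ h₁ h₂ h₃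
      rw [tensor_expand, tensor_expand, hu₁, hu₂, hu₃, h₁, h₂, h₃, ← hC, ← hD] at h
      nlinarith [sq_abs D, abs_nonneg D, hlamC]
  exact hgreat.csSup_eq.symm
end
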